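/- arXiv:1605.08905 — 10 statements merged into one kernel-verified Lean document; each statement's English description precedes it below -/
import Mathlib

section
/- Let k ≥ 2. An oriented graph G with directed girth at least k+1 satisfies χ_{k-dip}(G) = |V(G)| if and only if G has weak diameter at most k. -/
/-- A directed walk of length `n` in the digraph with arc relation `A`,
given as a function `p : ℕ → V` (only indices `0..n` matter). -/
def IsDiwalk {V : Type*} (A : V → V → Prop) (n : ℕ) (p : ℕ → V) : Prop :=
  ∀ i < n, A (p i) (p (i+1))

/-- A directed path of length `n`: a directed walk whose vertices `p 0, …, p n`
are pairwise distinct. -/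
def IsDipath {V : Type*} (A : V → V → Prop) (n : ℕ) (p : ℕ → V) : Prop :=
  IsDiwalk A n p ∧ ∀ i ≤ n, ∀ j ≤ n, p i = p j → i = j

/-- A directed cycle of length `n`: a directed walk with `p 0 = p n` whose
vertices `p 0, …, p (n-1)` are pairwise distinct. -/
def IsDicycle {V : Type*} (A : V → V → Prop) (n : ℕ) (p : ℕ → V) : Prop :=
  IsDiwalk A n p ∧ p 0 = p n ∧ ∀ i < n, ∀ j < n, p i = p j → i = j

/-- A digraph is acyclic if it has no directed cycle of positive length. -/
def Acyclic {V : Type*} (A : V → V → Prop) : Prop :=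
  ∀ n, 0 < n → ∀ p : ℕ → V, ¬ IsDicycle A n p

/-- Directed girth at least `g`: no directed cycle of length less than `g`. -/
def GirthAtLeast {V : Type*} (A : V → V → Prop) (g : ℕ) : Prop :=
  ∀ n, 0 < n → n < g → ∀ p : ℕ → V, ¬ IsDicycle A n p

/-- An oriented graph: a loopless digraph with no digons. -/
def Oriented {V : Type*} (A : V → V → Prop) : Prop :=
  (∀ x, ¬ A x x) ∧ ∀ x y, A x y → ¬ A y x

/-- A `k`-dipath `t`-colouring: vertices joined by a directed path of length
at most `k` (and at least 1) receive different colours. -/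
def IsDipathColoring {V : Type*} (A : V → V → Prop) (k : ℕ) {t : ℕ} (c : V → Fin t) : Prop :=
  ∀ ℓ, 0 < ℓ → ℓ ≤ k → ∀ p : ℕ → V, IsDipath A ℓ p → c (p 0) ≠ c (p ℓ)

/-- The `k`-dipath chromatic number. -/
noncomputable def dipChrom {V : Type*} (A : V → V → Prop) (k : ℕ) : ℕ :=
  sInf {t | ∃ c : V → Fin t, IsDipathColoring A k c}

/-- A homomorphism of digraphs. -/
def DiHom {V W : Type*} (A : V → V → Prop) (B : W → W → Prop) (φ : V → W) : Prop :=
  ∀ x y, A x y → B (φ x) (φ y)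

/-- The transitive tournament on `t` vertices. -/
def transTour (t : ℕ) : Fin t → Fin t → Prop := fun i j => i < j

/-- The oriented chromatic number: the least `t` such that there is a
homomorphism to some oriented graph on `t` vertices. -/
noncomputable def oChrom {V : Type*} (A : V → V → Prop) : ℕ :=
  sInf {t | ∃ B : Fin t → Fin t → Prop, Oriented B ∧ ∃ φ : V → Fin t, DiHom A B φ}

/-- Weak distance at most `k`: a directed walk of length at most `k`
from `x` to `y` or from `y` to `x`. -/
def WeakDistLE {V : Type*} (A : V → V → Prop) (k : ℕ) (x y : V) : Prop :=
  ∃ ℓ ≤ k, ∃ p : ℕ → V, IsDiwalk A ℓ p ∧ ((p 0 = x ∧ p ℓ = y) ∨ (p 0 = y ∧ p ℓ = x))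

/-- The directed cycle of length `m`. -/
def dicycleRel (m : ℕ) : Fin m → Fin m → Prop := fun i j => j.val = (i.val + 1) % m

/-- The directed path on `m+1` vertices (length `m`). -/
def dipathRel (m : ℕ) : Fin (m+1) → Fin (m+1) → Prop := fun i j => i.val + 1 = j.val


lemma diwalk_shorten {V : Type*} {A : V → V → Prop} {ℓ i j : ℕ} {p : ℕ → V}
    (hp : IsDiwalk A ℓ p) (hij : i < j) (hj : j ≤ ℓ) (heq : p i = p j) :
    ∃ ℓ' < ℓ, ∃ q : ℕ → V, IsDiwalk A ℓ' q ∧ q 0 = p 0 ∧ q ℓ' = p ℓ := by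
  refine ⟨ℓ - (j - i), by omega, fun m => if m ≤ i then p m else p (m + (j - i)), ?_, ?_, ?_⟩
  · intro m hm
    by_cases h1 : m + 1 ≤ i
    · simp only [if_pos (by omega : m ≤ i), if_pos h1]
      exact hp m (by omega)
    · by_cases h2 : m ≤ i
      · have hmi : m = i := by omega
        simp only [if_pos h2, if_neg h1]
        rw [hmi, heq, show i + 1 + (j - i) = j + 1 from by omega]
        exact hp j (by omega)
      · simp only [if_neg h2, if_neg (show ¬ m + 1 ≤ i by omega)]
        rw [show m + 1 + (j - i) = (m + (j - i)) + 1 from by omega]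
        exact hp _ (by omega)
  · simp
  · dsimp only
    by_cases h : ℓ - (j - i) ≤ i
    · have h1 : ℓ - (j - i) = i := by omega
      rw [if_pos h, h1, heq]
      congr 1; omega
    · rw [if_neg h]; congr 1; omega

lemma walk_to_path {V : Type*} {A : V → V → Prop} :
    ∀ ℓ : ℕ, ∀ p : ℕ → V, IsDiwalk A ℓ p →
    ∃ ℓ' ≤ ℓ, ∃ q : ℕ → V, IsDipath A ℓ' q ∧ q 0 = p 0 ∧ q ℓ' = p ℓ := by
  intro ℓ
  induction ℓ using Nat.strong_induction_on with
  | _ ℓ ih =>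
    intro p hp
    by_cases hinj : ∀ i ≤ ℓ, ∀ j ≤ ℓ, p i = p j → i = j
    · exact ⟨ℓ, le_refl _, p, ⟨hp, hinj⟩, rfl, rfl⟩
    · push_neg at hinj
      obtain ⟨i, hi, j, hj, heq, hne⟩ := hinj
      rcases hne.lt_or_gt with hij | hij
      · obtain ⟨ℓ', hℓ', q, hq, h0, hE⟩ := diwalk_shorten hp hij hj heq
        obtain ⟨ℓ'', h'', q', hq', h0', hE'⟩ := ih ℓ' hℓ' q hq
        exact ⟨ℓ'', by omega, q', hq', h0'.trans h0, hE'.trans hE⟩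
      · obtain ⟨ℓ', hℓ', q, hq, h0, hE⟩ := diwalk_shorten hp hij hi heq.symm
        obtain ⟨ℓ'', h'', q', hq', h0', hE'⟩ := ih ℓ' hℓ' q hq
        exact ⟨ℓ'', by omega, q', hq', h0'.trans h0, hE'.trans hE⟩

/-- for `k ≥ 2`, an oriented graph with directed girth at least
`k+1` is a `k`-dipath clique (χ_{k-dip} = |V|) iff it has weak diameter at most `k`. -/
theorem stmt3 {V : Type*} [Fintype V] (A : V → V → Prop) (k : ℕ) (hk : 2 ≤ k)
    (hor : Oriented A) (hg : GirthAtLeast A (k + 1)) :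
    dipChrom A k = Fintype.card V ↔ ∀ x y : V, x ≠ y → WeakDistLE A k x y := by
  classical
  set n := Fintype.card V with hn
  constructor
  · -- dipChrom = n → weak diameter ≤ k
    intro h x y hxy
    by_contra hw
    have hn2 : 2 ≤ n := Fintype.one_lt_card_iff_nontrivial.mpr ⟨⟨x, y, hxy⟩⟩
    have hcard : Fintype.card {v : V // v ≠ y} = n - 1 := by
      simp [Fintype.card_subtype_compl, hn]
    let e : {v : V // v ≠ y} ≃ Fin (n - 1) := Fintype.equivFinOfCardEq hcard
    let c : V → Fin (n - 1) := fun v =>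
      e ⟨if v = y then x else v, by split <;> simp_all⟩
    have hc : IsDipathColoring A k c := by
      intro ℓ h0 hℓk p hp hcc
      have hne : p 0 ≠ p ℓ := fun hEq => by
        have := hp.2 0 (Nat.zero_le _) ℓ (le_refl _) hEq
        omega
      have hsub := e.injective hcc
      have hval : (if p 0 = y then x else p 0) = (if p ℓ = y then x else p ℓ) :=
        congrArg Subtype.val hsub
      apply hw
      split_ifs at hval with h1 h2 h2
      · exact absurd (h1.trans h2.symm) hne
      · exact ⟨ℓ, hℓk, p, hp.1, Or.inr ⟨h1, hval.symm⟩⟩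
      · exact ⟨ℓ, hℓk, p, hp.1, Or.inl ⟨hval, h2⟩⟩
      · exact absurd hval hne
    have : dipChrom A k ≤ n - 1 := Nat.sInf_le ⟨c, hc⟩
    omega
  · -- weak diameter ≤ k → dipChrom = n
    intro h
    apply le_antisymm
    · apply Nat.sInf_le
      refine ⟨Fintype.equivFin V, ?_⟩
      intro ℓ h0 hℓk p hp hcc
      have := hp.2 0 (Nat.zero_le _) ℓ (le_refl _) ((Fintype.equivFin V).injective hcc)
      omega
    · refine le_csInf ⟨n, Fintype.equivFin V, ?_⟩ ?_
      · intro ℓ h0 hℓk p hp hcc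
        have := hp.2 0 (Nat.zero_le _) ℓ (le_refl _) ((Fintype.equivFin V).injective hcc)
        omega
      · rintro t ⟨c, hc⟩
        have hinj : Function.Injective c := by
          intro x y hcxy
          by_contra hxy
          obtain ⟨ℓ, hℓk, p, hwalk, hend⟩ := h x y hxy
          obtain ⟨ℓ', hℓ', q, hq, h0, hE⟩ := walk_to_path ℓ p hwalk
          have hℓpos : 0 < ℓ' := by
            rcases Nat.eq_zero_or_pos ℓ' with h0' | h0'
            · exfalso
              apply hxy
              rw [h0'] at hE
              rcases hend with ⟨ha, hb⟩ | ⟨ha, hb⟩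
              · rw [← ha, ← hb, ← h0, ← hE]
              · rw [← hb, ← ha, ← hE, ← h0]
            · exact h0'
          have := hc ℓ' hℓpos (hℓ'.trans hℓk) q hq
          rw [h0, hE] at this
          rcases hend with ⟨ha, hb⟩ | ⟨ha, hb⟩
          · rw [ha, hb] at this; exact this hcxy
          · rw [ha, hb] at this; exact this hcxy.symm
        simpa [hn] using Fintype.card_le_of_injective c hinj
end

section
/- If G is an oriented graph with directed girth at least k+1, then there is a bijection between the k-dipath t-colourings of G and the proper t-colourings of the simple graph G^k, where V(G^k) = V(G) and uv ∈ E(G^k) iff 0 < d_weak(u,v) ≤ k. -/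

lemma closed_walk_cycle {V : Type*} {A : V → V → Prop} :
    ∀ m, 0 < m → ∀ q : ℕ → V, IsDiwalk A m q → q 0 = q m →
    ∃ m', 0 < m' ∧ m' ≤ m ∧ ∃ r, IsDicycle A m' r := by
  intro m
  induction m using Nat.strong_induction_on with
  | _ m ih =>
    intro hm q hw hc
    by_cases hdist : ∀ i < m, ∀ j < m, q i = q j → i = j
    · exact ⟨m, hm, le_refl m, q, hw, hc, hdist⟩
    · push_neg at hdist
      obtain ⟨i, hi, j, hj, hij, hne⟩ := hdist
      have key : ∀ a b, a < b → b < m → q a = q b →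
          ∃ m', 0 < m' ∧ m' ≤ m ∧ ∃ r, IsDicycle A m' r := by
        intro a b hab hbm he
        have hw' : IsDiwalk A (b - a) (fun n => q (a + n)) := by
          intro n hn
          have h1 : a + n < m := by omega
          have h2 : a + (n + 1) = a + n + 1 := by omega
          simpa [h2] using hw (a + n) h1
        have hc' : (fun n => q (a + n)) 0 = (fun n => q (a + n)) (b - a) := by
          simp only
          have : a + (b - a) = b := by omega
          rw [Nat.add_zero, this]; exact he
        obtain ⟨m', h1, h2, r, hr⟩ := ih (b - a) (by omega) (by omega) _ hw' hc'
        exact ⟨m', h1, by omega, r, hr⟩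
      rcases lt_or_gt_of_ne hne with h | h
      · exact key i j h hj hij
      · exact key j i h hi hij.symm

lemma walk_is_path {V : Type*} {A : V → V → Prop} {k ℓ : ℕ} {p : ℕ → V}
    (hg : GirthAtLeast A (k + 1)) (hlk : ℓ ≤ k) (hw : IsDiwalk A ℓ p) :
    ∀ i ≤ ℓ, ∀ j ≤ ℓ, p i = p j → i = j := by
  have key : ∀ a b, a < b → b ≤ ℓ → p a = p b → False := by
    intro a b hab hbl he
    have hw' : IsDiwalk A (b - a) (fun n => p (a + n)) := by
      intro n hn
      have h1 : a + n < ℓ := by omega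
      have h2 : a + (n + 1) = a + n + 1 := by omega
      simpa [h2] using hw (a + n) h1
    have hc' : (fun n => p (a + n)) 0 = (fun n => p (a + n)) (b - a) := by
      simp only
      have : a + (b - a) = b := by omega
      rw [Nat.add_zero, this]; exact he
    obtain ⟨m', h1, h2, r, hr⟩ := closed_walk_cycle (b - a) (by omega) _ hw' hc'
    exact hg m' h1 (by omega) r hr
  intro i hi j hj he
  by_contra hne
  rcases lt_or_gt_of_ne hne with h | h
  · exact key i j h hj he
  · exact key j i h hi he.symm

/-- for an oriented graph of directed girth at least `k+1`,
there is a bijection between `k`-dipath `t`-colourings of `G` and proper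
`t`-colourings of the simple graph `G^k`. -/
theorem stmt4 {V : Type*} (A : V → V → Prop) (k t : ℕ)
    (hor : Oriented A) (hg : GirthAtLeast A (k + 1)) :
    Nonempty ({c : V → Fin t // IsDipathColoring A k c} ≃
      {c : V → Fin t // ∀ u v : V, u ≠ v → WeakDistLE A k u v → c u ≠ c v}) := by
  refine ⟨Equiv.subtypeEquivRight fun c => ⟨?_, ?_⟩⟩
  · intro hcol u v huv ⟨ℓ, hℓk, p, hw, hends⟩
    rcases Nat.eq_zero_or_pos ℓ with h0 | hpos
    · subst h0
      rcases hends with ⟨h1, h2⟩ | ⟨h1, h2⟩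
      · exact absurd (h1.symm.trans h2) huv
      · exact absurd (h2.symm.trans h1) huv
    · have hpath : IsDipath A ℓ p := ⟨hw, walk_is_path hg hℓk hw⟩
      have := hcol ℓ hpos hℓk p hpath
      rcases hends with ⟨h1, h2⟩ | ⟨h1, h2⟩
      · rw [← h1, ← h2]; exact this
      · rw [← h1, ← h2]; exact this.symm
  · intro hc ℓ hpos hℓk p hp
    have hne : p 0 ≠ p ℓ := fun h => by
      have := hp.2 0 (Nat.zero_le _) ℓ (le_refl _) h; omega
    exact hc (p 0) (p ℓ) hne ⟨ℓ, hℓk, p, hp.1, Or.inl ⟨rfl, rfl⟩⟩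
end

section
/- Let G and H be oriented graphs such that H has directed girth at least k+1. If there is a homomorphism G → H, then χ_{k-dip}(G) ≤ χ_{k-dip}(H). -/
/-- if `H` has directed girth at least `k+1` and `G → H`,
then `χ_{k-dip}(G) ≤ χ_{k-dip}(H)`. -/
theorem stmt5 {V W : Type*} [Fintype V] [Fintype W]
    (A : V → V → Prop) (B : W → W → Prop) (k : ℕ)
    (horA : Oriented A) (horB : Oriented B)
    (hg : GirthAtLeast B (k + 1)) (φ : V → W) (hφ : DiHom A B φ) :
    dipChrom A k ≤ dipChrom B k := by
  classical
  have key : ∀ t (c : W → Fin t), IsDipathColoring B k c →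
      IsDipathColoring A k (fun v => c (φ v)) := by
    intro t c hc ℓ hℓ hℓk p hp
    have hwalk : IsDiwalk B ℓ (fun i => φ (p i)) := fun i hi => hφ _ _ (hp.1 i hi)
    have hinj : ∀ i ≤ ℓ, ∀ j ≤ ℓ, φ (p i) = φ (p j) → i = j := by
      by_contra h
      push_neg at h
      obtain ⟨i, hi, j, hj, hij, hne⟩ := h
      have hex : ∃ d, 0 < d ∧ ∃ a, a + d ≤ ℓ ∧ φ (p a) = φ (p (a + d)) := by
        rcases lt_or_gt_of_ne hne with h' | h'
        · exact ⟨j - i, by omega, i, by omega, by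
            rw [show i + (j - i) = j by omega]; exact hij⟩
        · exact ⟨i - j, by omega, j, by omega, by
            rw [show j + (i - j) = i by omega]; exact hij.symm⟩
      set S := {d | 0 < d ∧ ∃ a, a + d ≤ ℓ ∧ φ (p a) = φ (p (a + d))} with hS
      have hSne : S.Nonempty := hex
      obtain ⟨hd0pos, a, ha, heq⟩ := Nat.sInf_mem hSne
      set d0 := sInf S with hd0
      have hmin : ∀ d ∈ S, d0 ≤ d := fun d hd => Nat.sInf_le hd
      refine hg d0 hd0pos (by omega) (fun m => φ (p (a + m))) ⟨?_, ?_, ?_⟩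
      · intro m hm
        have := hp.1 (a + m) (by omega)
        simpa [Nat.add_assoc] using hφ _ _ this
      · simpa using heq
      · intro x hx y hy hxy
        by_contra hne2
        rcases lt_or_gt_of_ne hne2 with h' | h'
        · have : y - x ∈ S := ⟨by omega, a + x, by omega, by
            rw [show a + x + (y - x) = a + y by omega]; exact hxy⟩
          have := hmin _ this; omega
        · have : x - y ∈ S := ⟨by omega, a + y, by omega, by
            rw [show a + y + (x - y) = a + x by omega]; exact hxy.symm⟩
          have := hmin _ this; omega
    exact hc ℓ hℓ hℓk (fun i => φ (p i)) ⟨hwalk, hinj⟩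
  have hBne : {t | ∃ c : W → Fin t, IsDipathColoring B k c}.Nonempty := by
    refine ⟨Fintype.card W, Fintype.equivFin W, ?_⟩
    intro ℓ hℓ _ p hp hcp
    have := hp.2 0 (by omega) ℓ (by omega) ((Fintype.equivFin W).injective hcp)
    omega
  have hmem := Nat.sInf_mem hBne
  obtain ⟨c, hc⟩ := hmem
  exact Nat.sInf_le ⟨fun v => c (φ v), key _ c hc⟩
end

section
/- If there is a homomorphism φ : G → H of digraphs and W is a directed walk of length ℓ ≤ k in G, and H has directed girth at least k+1, then the image of W under φ is a directed path in H (in particular, all vertices of φ(W) are distinct). -/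
lemma closed_walk_contains_cycle {W : Type*} (B : W → W → Prop) :
    ∀ n, 0 < n → ∀ q : ℕ → W, IsDiwalk B n q → q 0 = q n →
      ∃ m, 0 < m ∧ m ≤ n ∧ ∃ r : ℕ → W, IsDicycle B m r := by
  intro n
  induction n using Nat.strong_induction_on with
  | _ n ih =>
    intro hn q hq hclosed
    by_cases hdist : ∀ i < n, ∀ j < n, q i = q j → i = j
    · exact ⟨n, hn, le_refl n, q, hq, hclosed, hdist⟩
    · push_neg at hdist
      obtain ⟨i, hi, j, hj, hij, hne⟩ := hdist
      -- wlog i < j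
      rcases lt_or_gt_of_ne hne with h | h
      · have hwalk : IsDiwalk B (j - i) (fun t => q (i + t)) := by
          intro t ht
          show B (q (i + t)) (q (i + (t + 1)))
          have e : i + (t + 1) = (i + t) + 1 := by omega
          rw [e]; exact hq (i + t) (by omega)
        have hcl : q (i + 0) = q (i + (j - i)) := by
          have h1 : i + (j - i) = j := by omega
          rw [Nat.add_zero, h1]; exact hij
        obtain ⟨m, hm1, hm2, hr⟩ := ih (j - i) (by omega) (by omega)
          (fun t => q (i + t)) hwalk hcl
        exact ⟨m, hm1, by omega, hr⟩
      · have hwalk : IsDiwalk B (i - j) (fun t => q (j + t)) := by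
          intro t ht
          show B (q (j + t)) (q (j + (t + 1)))
          have e : j + (t + 1) = (j + t) + 1 := by omega
          rw [e]; exact hq (j + t) (by omega)
        have hcl : q (j + 0) = q (j + (i - j)) := by
          have h1 : j + (i - j) = i := by omega
          rw [Nat.add_zero, h1]; exact hij.symm
        obtain ⟨m, hm1, hm2, hr⟩ := ih (i - j) (by omega) (by omega)
          (fun t => q (j + t)) hwalk hcl
        exact ⟨m, hm1, by omega, hr⟩

/-- the image under a homomorphism of a directed walk of length
`ℓ ≤ k` is a directed path, provided the target has directed girth ≥ `k+1`. -/
theorem stmt6 {V W : Type*} (A : V → V → Prop) (B : W → W → Prop)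
    (φ : V → W) (hφ : DiHom A B φ) (k ℓ : ℕ) (hℓ : ℓ ≤ k)
    (hg : GirthAtLeast B (k + 1)) (p : ℕ → V) (hw : IsDiwalk A ℓ p) :
    IsDipath B ℓ (φ ∘ p) := by
  have hwB : IsDiwalk B ℓ (φ ∘ p) := fun i hi => hφ _ _ (hw i hi)
  refine ⟨hwB, ?_⟩
  intro i hi j hj heq
  by_contra hne
  -- wlog i < j by symmetry
  have key : ∀ i j : ℕ, i < j → j ≤ ℓ → (φ ∘ p) i = (φ ∘ p) j → False := by
    intro a b hab hb he
    have hwalk : IsDiwalk B (b - a) (fun t => (φ ∘ p) (a + t)) := by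
      intro t ht
      show B ((φ ∘ p) (a + t)) ((φ ∘ p) (a + (t + 1)))
      have e : a + (t + 1) = (a + t) + 1 := by omega
      rw [e]; exact hwB (a + t) (by omega)
    have hcl : (φ ∘ p) (a + 0) = (φ ∘ p) (a + (b - a)) := by
      have h1 : a + (b - a) = b := by omega
      rw [Nat.add_zero, h1]; exact he
    obtain ⟨m, hm1, hm2, r, hr⟩ := closed_walk_contains_cycle B (b - a)
      (by omega) (fun t => (φ ∘ p) (a + t)) hwalk hcl
    exact hg m hm1 (by omega) r hr
  rcases lt_or_gt_of_ne hne with h | h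
  · exact key i j h hj heq
  · exact key j i h hi heq.symm
end

section
/- Every vertex colouring of a digraph obtained by composing a homomorphism φ : G → H with a k-dipath colouring c of H, where H has directed girth at least k+1, is a k-dipath colouring of G. -/
/-- composing a homomorphism `φ : G → H` with a `k`-dipath
colouring of `H` (where `H` has directed girth ≥ `k+1`) yields a `k`-dipath
colouring of `G`. -/
theorem stmt7 {V W : Type*} (A : V → V → Prop) (B : W → W → Prop)
    (φ : V → W) (hφ : DiHom A B φ) (k t : ℕ)
    (hg : GirthAtLeast B (k + 1)) (c : W → Fin t)
    (hc : IsDipathColoring B k c) :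
    IsDipathColoring A k (c ∘ φ) := by
  classical
  intro ℓ hℓ hℓk p hp
  set q : ℕ → W := fun i => φ (p i) with hq
  have hwalk : IsDiwalk B ℓ q := fun i hi => hφ _ _ (hp.1 i hi)
  -- key: no repeated vertex along q, else a short dicycle in B
  have hdist : ∀ i ≤ ℓ, ∀ j ≤ ℓ, q i = q j → i = j := by
    by_contra hcon
    push_neg at hcon
    obtain ⟨i, hi, j, hj, hij, hne⟩ := hcon
    -- wlog i < j : produce a pair (a, a+d) with q a = q (a+d)
    have hpair : ∃ d, 0 < d ∧ ∃ a, a + d ≤ ℓ ∧ q a = q (a + d) := by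
      rcases Nat.lt_or_ge i j with h | h
      · exact ⟨j - i, Nat.sub_pos_of_lt h, i, by omega,
          by rw [Nat.add_sub_cancel' (le_of_lt h)]; exact hij⟩
      · have h' : j < i := lt_of_le_of_ne h (Ne.symm hne)
        exact ⟨i - j, Nat.sub_pos_of_lt h', j, by omega,
          by rw [Nat.add_sub_cancel' (le_of_lt h')]; exact hij.symm⟩
    have hP : ∃ d, 0 < d ∧ ∃ a, a + d ≤ ℓ ∧ q a = q (a + d) := hpair
    set d := Nat.find hP with hdDef
    obtain ⟨hd0, a, had, hqa⟩ := Nat.find_spec hP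
    refine hg d hd0 (by omega) (fun s => q (a + s)) ⟨?_, by simpa using hqa, ?_⟩
    · intro s hs
      have : a + s < ℓ := by omega
      simpa [Nat.add_assoc] using hwalk (a + s) this
    · intro s1 hs1 s2 hs2 heq
      by_contra hne'
      rcases Nat.lt_or_ge s1 s2 with h | h
      · have : s2 - s1 < d := by omega
        exact Nat.find_min hP this ⟨by omega, a + s1, by omega,
          by rw [show a + s1 + (s2 - s1) = a + s2 by omega]; exact heq⟩
      · have h' : s2 < s1 := lt_of_le_of_ne h (Ne.symm hne')
        have : s1 - s2 < d := by omega
        exact Nat.find_min hP this ⟨by omega, a + s2, by omega,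
          by rw [show a + s2 + (s1 - s2) = a + s1 by omega]; exact heq.symm⟩
  exact hc ℓ hℓ hℓk q ⟨hwalk, hdist⟩
end

section
/- If G is an oriented graph and T is the oriented graph on 5 vertices consisting of a directed 3-cycle together with a universal source and a universal sink, then every oriented graph with 2-dipath chromatic number at most 3 admits a homomorphism to T; consequently χ_o(G) ≤ 5 whenever χ_{2-dip}(G) ≤ 3. -/
/-- The tournament on 5 vertices: a directed 3-cycle `1 → 2 → 3 → 1`
together with a universal source `0` and a universal sink `4`. -/
def T5 : Fin 5 → Fin 5 → Prop := fun i j =>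
  (i = 0 ∧ j ≠ 0) ∨ (j = 4 ∧ i ≠ 0 ∧ i ≠ 4) ∨
  (i = 1 ∧ j = 2) ∨ (i = 2 ∧ j = 3) ∨ (i = 3 ∧ j = 1)


def auxf : Fin 3 → Fin 3 → Fin 5 := fun a b =>
  if a = 0 then 1 else if b = 0 then 3 else 2

lemma auxf_ne (a b : Fin 3) : auxf a b ≠ 0 ∧ auxf a b ≠ 4 := by
  unfold auxf; fin_cases a <;> fin_cases b <;> decide

lemma auxf_key : ∀ a b t : Fin 3, a ≠ b → t ≠ a → t ≠ b →
    T5 (auxf a b) (auxf b t) := by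
  unfold T5 auxf; decide

lemma oriented_T5 : Oriented T5 := by
  unfold Oriented T5; decide

/-- every oriented graph with 2-dipath chromatic number at most 3
admits a homomorphism to `T5`; consequently `χ_o(G) ≤ 5` whenever
`χ_{2-dip}(G) ≤ 3`. -/
theorem stmt11 {V : Type*} [Fintype V] (A : V → V → Prop) (hor : Oriented A)
    (h : ∃ c : V → Fin 3, IsDipathColoring A 2 c) :
    (∃ φ : V → Fin 5, DiHom A T5 φ) ∧ oChrom A ≤ 5 := by
  classical
  obtain ⟨c, hc⟩ := h
  -- basic consequences of the colouring
  have hc1 : ∀ x y, A x y → c x ≠ c y := by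
    intro x y hxy
    have hne : x ≠ y := fun he => hor.1 y (he ▸ hxy)
    have hp : IsDipath A 1 (fun i => if i = 0 then x else y) := by
      constructor
      · intro i hi; interval_cases i; simpa using hxy
      · intro i hi j hj hpe
        interval_cases i <;> interval_cases j <;> simp_all
    simpa using hc 1 one_pos one_le_two _ hp
  have hnd : ∀ u x y, A u x → A x y → u ≠ y := by
    intro u x y h1 h2 he; exact hor.2 x y h2 (he ▸ h1)
  have hc2 : ∀ u x y, A u x → A x y → c u ≠ c y := by
    intro u x y h1 h2
    have huy : u ≠ y := hnd u x y h1 h2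
    have hux : u ≠ x := fun he => hor.1 x (he ▸ h1)
    have hxy : x ≠ y := fun he => hor.1 y (he ▸ h2)
    have hp : IsDipath A 2 (fun i => if i = 0 then u else if i = 1 then x else y) := by
      constructor
      · intro i hi; interval_cases i <;> simpa using by assumption
      · intro i hi j hj hpe
        interval_cases i <;> interval_cases j <;> simp_all
    simpa using hc 2 two_pos le_rfl _ hp
  have pigeon : ∀ a b v w : Fin 3, a ≠ b → v ≠ a → v ≠ b → w ≠ a → w ≠ b → v = w := by
    decide
  have huniq : ∀ u x y y', A u x → A x y → A x y' → c y = c y' := by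
    intro u x y y' hu hy hy'
    exact pigeon (c u) (c x) (c y) (c y') (hc1 u x hu)
      (hc2 u x y hu hy).symm (fun he => hc1 x y hy he.symm)
      (hc2 u x y' hu hy').symm (fun he => hc1 x y' hy' he.symm)
  set φ : V → Fin 5 := fun x =>
    if _ : ∃ u, A u x then
      (if h2 : ∃ y, A x y then auxf (c x) (c h2.choose) else 4)
    else 0 with hφ
  have hhom : DiHom A T5 φ := by
    intro x y hxy
    have hyin : ∃ u, A u y := ⟨x, hxy⟩
    have hxout : ∃ z, A x z := ⟨y, hxy⟩
    by_cases hxin : ∃ u, A u x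
    · have hφx : φ x = auxf (c x) (c hxout.choose) := by
        simp only [hφ]; rw [dif_pos hxin, dif_pos hxout]
      obtain ⟨u, hu⟩ := hxin
      have hcy : c hxout.choose = c y := huniq u x _ y hu hxout.choose_spec hxy
      by_cases hyout : ∃ z, A y z
      · have hφy : φ y = auxf (c y) (c hyout.choose) := by
          simp only [hφ]; rw [dif_pos hyin, dif_pos hyout]
        rw [hφx, hφy, hcy]
        exact auxf_key _ _ _ (hc1 x y hxy)
          (hc2 x y _ hxy hyout.choose_spec).symm
          (fun he => hc1 y _ hyout.choose_spec he.symm)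
      · have hφy : φ y = 4 := by
          simp only [hφ]; rw [dif_pos hyin, dif_neg hyout]
        rw [hφx, hφy]
        exact Or.inr (Or.inl ⟨rfl, (auxf_ne _ _).1, (auxf_ne _ _).2⟩)
    · have hφx : φ x = 0 := by simp only [hφ]; rw [dif_neg hxin]
      have hφy0 : φ y ≠ 0 := by
        simp only [hφ]; rw [dif_pos hyin]
        by_cases hyout : ∃ z, A y z
        · rw [dif_pos hyout]; exact (auxf_ne _ _).1
        · rw [dif_neg hyout]; decide
      exact Or.inl ⟨hφx, hφy0⟩
  refine ⟨⟨φ, hhom⟩, ?_⟩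
  exact Nat.sInf_le ⟨T5, oriented_T5, φ, hhom⟩
end

section
/- The directed path on 4 vertices has oriented chromatic number 3 but 4-dipath chromatic number 4. -/

lemma oChrom_mem : 3 ∈ {t | ∃ B : Fin t → Fin t → Prop, Oriented B ∧ ∃ φ : Fin 4 → Fin t, DiHom (dipathRel 3) B φ} := by
  refine ⟨dicycleRel 3, ⟨?_, ?_⟩, fun i => ⟨i.val % 3, Nat.mod_lt _ (by norm_num)⟩, ?_⟩
  · intro x hx
    simp only [dicycleRel] at hx
    have := x.isLt
    omega
  · intro x y hxy hyx
    simp only [dicycleRel] at hxy hyx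
    have := x.isLt; have := y.isLt
    omega
  · intro x y h
    simp only [dipathRel] at h
    simp only [dicycleRel]
    omega

lemma oChrom_lb : ∀ m ∈ {t | ∃ B : Fin t → Fin t → Prop, Oriented B ∧ ∃ φ : Fin 4 → Fin t, DiHom (dipathRel 3) B φ}, 3 ≤ m := by
  intro m ⟨B, hB, φ, hφ⟩
  by_contra h
  push_neg at h
  have h01 : B (φ 0) (φ 1) := hφ 0 1 (by simp [dipathRel])
  have h12 : B (φ 1) (φ 2) := hφ 1 2 (by simp [dipathRel])
  have n01 : φ 0 ≠ φ 1 := by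
    intro he; exact hB.1 (φ 1) (he ▸ h01)
  have n12 : φ 1 ≠ φ 2 := by
    intro he; exact hB.1 (φ 2) (he ▸ h12)
  have e02 : φ 2 = φ 0 := by
    have l0 := (φ 0).isLt
    have l1 := (φ 1).isLt
    have l2 := (φ 2).isLt
    have v01 : (φ 0).val ≠ (φ 1).val := fun hv => n01 (Fin.ext hv)
    have v12 : (φ 1).val ≠ (φ 2).val := fun hv => n12 (Fin.ext hv)
    exact Fin.ext (by omega)
  exact hB.2 (φ 0) (φ 1) h01 (e02 ▸ h12)

lemma dip_mem : 4 ∈ {t | ∃ c : Fin 4 → Fin t, IsDipathColoring (dipathRel 3) 4 c} := by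
  refine ⟨id, fun ℓ hℓ _ p hp hc => ?_⟩
  have := hp.2 0 (Nat.zero_le _) ℓ (le_refl _) hc
  omega

lemma dip_lb : ∀ m ∈ {t | ∃ c : Fin 4 → Fin t, IsDipathColoring (dipathRel 3) 4 c}, 4 ≤ m := by
  intro m ⟨c, hc⟩
  have key : ∀ i j : Fin 4, i.val < j.val → c i ≠ c j := by
    intro i j hij
    set ℓ := j.val - i.val with hℓ
    have hj := j.isLt
    have hi := i.isLt
    set p : ℕ → Fin 4 := fun k => ⟨min (i.val + k) 3, by omega⟩ with hp
    have hpath : IsDipath (dipathRel 3) ℓ p := by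
      constructor
      · intro k hk
        simp only [dipathRel, hp]
        omega
      · intro a ha b hb he
        have : (p a).val = (p b).val := by rw [he]
        simp only [hp] at this
        omega
    have := hc ℓ (by omega) (by omega) p hpath
    have h0 : p 0 = i := Fin.ext (by simp [hp]; omega)
    have hL : p ℓ = j := Fin.ext (by simp [hp]; omega)
    rwa [h0, hL] at this
  have hinj : Function.Injective c := by
    intro a b he
    by_contra hne
    have : a.val ≠ b.val := fun hv => hne (Fin.ext hv)
    rcases Nat.lt_or_ge a.val b.val with h | h
    · exact key a b h he
    · exact key b a (by omega) he.symm
  have := Fintype.card_le_of_injective c hinj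
  simpa using this

/-- the directed path on 4 vertices has oriented chromatic
number 3 and 4-dipath chromatic number 4. -/
theorem stmt14 : oChrom (dipathRel 3) = 3 ∧ dipChrom (dipathRel 3) 4 = 4 := by
  constructor
  · exact le_antisymm (Nat.sInf_le oChrom_mem) (le_csInf ⟨3, oChrom_mem⟩ oChrom_lb)
  · exact le_antisymm (Nat.sInf_le dip_mem) (le_csInf ⟨4, dip_mem⟩ dip_lb)
end

section
/- Let t ≤ k be positive integers. If an oriented graph G has directed girth at least k+1 and admits a k-dipath t-colouring, then G contains no directed path with more than t vertices, and consequently G admits a homomorphism to the transitive tournament T_t. -/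
lemma dipath_trunc {V : Type*} {A : V → V → Prop} {n m : ℕ} {p : ℕ → V}
    (h : IsDipath A n p) (hm : m ≤ n) : IsDipath A m p :=
  ⟨fun i hi => h.1 i (lt_of_lt_of_le hi hm),
   fun i hi j hj => h.2 i (le_trans hi hm) j (le_trans hj hm)⟩

lemma dipath_shift {V : Type*} {A : V → V → Prop} {n : ℕ} {p : ℕ → V}
    (h : IsDipath A n p) (a m : ℕ) (hm : a + m ≤ n) :
    IsDipath A m (fun j => p (a + j)) := by
  constructor
  · intro i hi
    have h1 := h.1 (a + i) (by omega)
    have : a + (i + 1) = a + i + 1 := by omega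
    simpa [this] using h1
  · intro i hi j hj hij
    have := h.2 (a + i) (by omega) (a + j) (by omega) hij
    omega

/-- for `t ≤ k`, an oriented graph of directed girth at least
`k+1` with a `k`-dipath `t`-colouring has no directed path on more than `t`
vertices, and hence admits a homomorphism to `T_t`. -/
theorem stmt15 {V : Type*} (A : V → V → Prop) (k t : ℕ)
    (ht : 0 < t) (htk : t ≤ k) (hor : Oriented A)
    (hg : GirthAtLeast A (k + 1))
    (h : ∃ c : V → Fin t, IsDipathColoring A k c) :
    (∀ p : ℕ → V, ¬ IsDipath A t p) ∧
    ∃ φ : V → Fin t, DiHom A (transTour t) φ := by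
  obtain ⟨c, hc⟩ := h
  have part1 : ∀ p : ℕ → V, ¬ IsDipath A t p := by
    intro p hp
    -- c ∘ p is injective on Fin (t+1)
    have key : ∀ i j : ℕ, i < j → j ≤ t → c (p i) ≠ c (p j) := by
      intro i j hij hjt
      have hsh := dipath_shift hp i (j - i) (by omega)
      have := hc (j - i) (by omega) (by omega) _ hsh
      have e1 : i + 0 = i := by omega
      have e2 : i + (j - i) = j := by omega
      simpa [e1, e2] using this
    have inj : Function.Injective (fun i : Fin (t+1) => c (p i.val)) := by
      intro i j hij
      by_contra hne
      rcases lt_or_gt_of_ne (fun e : i = j => hne e) with hlt | hlt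
      · exact key i.val j.val hlt (by omega) hij
      · exact key j.val i.val hlt (by omega) hij.symm
    have := Fintype.card_le_of_injective _ inj
    simp at this
  -- every dipath has length < t
  have hlen : ∀ n (p : ℕ → V), IsDipath A n p → n < t := by
    intro n p hp
    by_contra hn
    exact part1 p (dipath_trunc hp (by omega))
  -- level function
  set S : V → Set ℕ := fun x => {ℓ | ∃ p : ℕ → V, IsDipath A ℓ p ∧ p ℓ = x} with hS
  have hne : ∀ x, (S x).Nonempty := by
    intro x
    exact ⟨0, fun y => x, ⟨fun i hi => absurd hi (by omega),
      fun i hi j hj _ => by omega⟩, rfl⟩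
  have hbdd : ∀ x, BddAbove (S x) := by
    intro x
    refine ⟨t, fun ℓ hℓ => ?_⟩
    obtain ⟨p, hp, _⟩ := hℓ
    exact le_of_lt (hlen ℓ p hp)
  have hmem : ∀ x, sSup (S x) ∈ S x := fun x => Nat.sSup_mem (hne x) (hbdd x)
  have hlt : ∀ x, sSup (S x) < t := by
    intro x
    obtain ⟨p, hp, _⟩ := hmem x
    exact hlen _ p hp
  refine ⟨part1, ⟨fun x => ⟨sSup (S x), hlt x⟩, ?_⟩⟩
  intro x y hxy
  -- show sSup (S x) < sSup (S y)
  obtain ⟨p, hp, hpx⟩ := hmem x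
  set m := sSup (S x) with hm
  have hmt : m < t := hlt x
  -- y is not on p
  have hynotp : ∀ i ≤ m, p i ≠ y := by
    intro i hi hpiy
    -- cycle p i, ..., p m, back to p i (= y), using arc x → y
    set L := m - i + 1 with hL
    set r : ℕ → V := fun j => if j = L then p i else p (i + j) with hr
    have hcyc : IsDicycle A L r := by
      refine ⟨?_, ?_, ?_⟩
      · intro j hj
        by_cases hjL : j + 1 = L
        · have : r j = p m := by
            simp only [hr]
            rw [if_neg (by omega)]
            congr 1; omega
          rw [this, show r (j+1) = p i by simp [hr, hjL]]
          rw [hpx, hpiy]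
          exact hxy
        · have e1 : r j = p (i + j) := by simp [hr]; intro e; omega
          have e2 : r (j+1) = p (i + j + 1) := by
            simp only [hr]; rw [if_neg hjL, show i + (j+1) = i + j + 1 from by omega]
          rw [e1, e2]
          exact hp.1 (i + j) (by omega)
      · simp [hr, hL]
      · intro a ha b hb hab
        have e1 : r a = p (i + a) := by simp only [hr]; rw [if_neg (by omega)]
        have e2 : r b = p (i + b) := by simp only [hr]; rw [if_neg (by omega)]
        rw [e1, e2] at hab
        have := hp.2 (i + a) (by omega) (i + b) (by omega) hab
        omega
    exact hg L (by omega) (by omega) r hcyc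
  -- extend p by y
  set q : ℕ → V := fun j => if j ≤ m then p j else y with hq
  have hq1 : IsDipath A (m + 1) q := by
    constructor
    · intro j hj
      by_cases hjm : j < m
      · have e1 : q j = p j := by simp [hq]; omega
        have e2 : q (j+1) = p (j+1) := by simp [hq]; omega
        rw [e1, e2]; exact hp.1 j hjm
      · have hjm' : j = m := by omega
        have e1 : q j = p m := by simp [hq, hjm']
        have e2 : q (j+1) = y := by simp [hq]; omega
        rw [e1, e2, hpx]; exact hxy
    · intro a ha b hb hab
      by_cases haM : a ≤ m <;> by_cases hbM : b ≤ m
      · have e1 : q a = p a := by simp [hq, haM]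
        have e2 : q b = p b := by simp [hq, hbM]
        rw [e1, e2] at hab
        exact hp.2 a haM b hbM hab
      · have e1 : q a = p a := by simp [hq, haM]
        have e2 : q b = y := by simp [hq]; omega
        rw [e1, e2] at hab
        exact absurd hab (hynotp a haM)
      · have e1 : q a = y := by simp [hq]; omega
        have e2 : q b = p b := by simp [hq, hbM]
        rw [e1, e2] at hab
        exact absurd hab.symm (hynotp b hbM)
      · omega
  have hmemy : m + 1 ∈ S y := ⟨q, hq1, by simp [hq]⟩
  have : m + 1 ≤ sSup (S y) := le_csSup (hbdd y) hmemy
  show (⟨sSup (S x), _⟩ : Fin t) < ⟨sSup (S y), _⟩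
  simp only [Fin.mk_lt_mk]
  omega
end

section
/- Let k ≥ 3 and t > k. For a simple graph G with acyclic orientation G̃, construct an oriented graph H: for each vertex v, take vertices v_in, v_out, a transitive tournament on t−k+1 vertices with source s_v and sink t_v, a directed path t_v, v'_1, …, v'_{k−2}, v_in of length k−1, and an arc v_out → s_v; for each arc uv of G̃ add the arc u_out → v_in. Then in every k-dipath t-colouring c of H and every vertex v of G, c(v_out) = c(v_in). -/
/-- The oriented graph `H_{k,t}` built from an (acyclically oriented) graph
with arc relation `E`.  For each vertex `v`, index `0` is `v_out`, indices
`1, …, t-k+1` form a transitive tournament (with source `s_v = 1` and sink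
`t_v = t-k+1`), indices `t-k+2, …, t-1` are the path vertices
`v´_1, …, v´_{k-2}`, and index `t` is `v_in`; the path
`t_v, v´_1, …, v´_{k-2}, v_in` has length `k-1`, and there is an arc
`v_out → s_v`.  For each arc `uv` of `E` there is an arc `u_out → v_in`. -/
def Hrel {V : Type*} (E : V → V → Prop) (k t : ℕ) :
    V × Fin (t + 1) → V × Fin (t + 1) → Prop :=
  fun a b =>
    (a.1 = b.1 ∧
      ((1 ≤ a.2.val ∧ a.2.val < b.2.val ∧ b.2.val ≤ t - k + 1) ∨
       (t - k + 1 ≤ a.2.val ∧ a.2.val ≤ t - 1 ∧ b.2.val = a.2.val + 1) ∨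
       (a.2.val = 0 ∧ b.2.val = 1))) ∨
    (E a.1 b.1 ∧ a.2.val = 0 ∧ b.2.val = t)


/-- in every `k`-dipath `t`-colouring `c` of `H_{k,t}`
(`t > k ≥ 3`), for every vertex `v`, `c(v_out) = c(v_in)`. -/
theorem stmt16 {V : Type*} (k t : ℕ) (hk : 3 ≤ k) (ht : k < t)
    (E : V → V → Prop) (hE : Acyclic E)
    (c : V × Fin (t + 1) → Fin t)
    (hc : IsDipathColoring (Hrel E k t) k c) :
    ∀ v : V, c (v, 0) = c (v, Fin.last t) := by
  intro v
  have mk : ∀ (ℓ : ℕ) (q : ℕ → ℕ), 0 < ℓ → ℓ ≤ k →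
      (∀ i j, i < j → j ≤ ℓ → q i < q j) →
      (∀ i, i ≤ ℓ → q i ≤ t) →
      (∀ i, i < ℓ →
        (1 ≤ q i ∧ q i < q (i+1) ∧ q (i+1) ≤ t - k + 1) ∨
        (t - k + 1 ≤ q i ∧ q i ≤ t - 1 ∧ q (i+1) = q i + 1) ∨
        (q i = 0 ∧ q (i+1) = 1)) →
      ∀ x y : Fin (t+1), x.val = q 0 → y.val = q ℓ → c (v, x) ≠ c (v, y) := by
    intro ℓ q hℓ hℓk mono hle arcs x y hx hy
    have hp : IsDipath (Hrel E k t) ℓ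
        (fun i => (v, ⟨min (q i) t, by omega⟩)) := by
      refine ⟨?_, ?_⟩
      · intro i hi
        have h1 := hle i hi.le
        have h2 := hle (i+1) hi
        have h3 := arcs i hi
        left
        refine ⟨rfl, ?_⟩
        simp only
        omega
      · intro i hi j hj hpij
        have h1 := hle i hi
        have h2 := hle j hj
        have h3 : min (q i) t = min (q j) t := by
          have := congrArg (fun z : V × Fin (t+1) => z.2.val) hpij
          simpa using this
        rcases Nat.lt_trichotomy i j with h|h|h
        · have := mono i j h hj; omega
        · exact h
        · have := mono j i h hi; omega
    have h0 := hle 0 (Nat.zero_le _)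
    have hl := hle ℓ le_rfl
    have hx' : x = ⟨min (q 0) t, by omega⟩ := by
      apply Fin.ext; simp only [hx]; omega
    have hy' : y = ⟨min (q ℓ) t, by omega⟩ := by
      apply Fin.ext; simp only [hy]; omega
    rw [hx', hy']
    exact hc ℓ hℓ hℓk _ hp
  have key : ∀ a b : ℕ, a < b → b ≤ t → ¬(a = 0 ∧ b = t) →
      ∀ x y : Fin (t+1), x.val = a → y.val = b → c (v, x) ≠ c (v, y) := by
    intro a b hab hbt hnot x y hx hy
    rcases Nat.eq_zero_or_pos a with ha | ha
    · subst ha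
      rcases Nat.lt_or_ge b 2 with hb1 | hb1
      · exact mk 1 (fun i => if i = 0 then 0 else 1) (by omega) (by omega)
          (by intro i j hij hj; beta_reduce; split_ifs <;> first | contradiction | omega)
          (by intro i hi; beta_reduce; split_ifs <;> first | contradiction | omega)
          (by intro i hi; beta_reduce; split_ifs <;> first | contradiction | omega)
          x y (by simpa using hx) (by simp; omega)
      · rcases Nat.lt_or_ge b (t - k + 2) with hb | hb
        · exact mk 2 (fun i => if i = 0 then 0 else if i = 1 then 1 else b)
            (by omega) (by omega)
            (by intro i j hij hj; beta_reduce; split_ifs <;> first | contradiction | omega)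
            (by intro i hi; beta_reduce; split_ifs <;> first | contradiction | omega)
            (by intro i hi; beta_reduce; split_ifs <;> first | contradiction | omega)
            x y (by simpa using hx) (by simpa using hy)
        · exact mk (b + k + 1 - t)
            (fun i => if i = 0 then 0 else if i = 1 then 1 else t - k + i - 1)
            (by omega) (by omega)
            (by intro i j hij hj; beta_reduce; split_ifs <;> first | contradiction | omega)
            (by intro i hi; beta_reduce; split_ifs <;> first | contradiction | omega)
            (by intro i hi; beta_reduce; split_ifs <;> first | contradiction | omega)
            x y (by simpa using hx) (by beta_reduce; split_ifs <;> first | contradiction | omega)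
    · rcases Nat.lt_or_ge (t - k + 1) b with hb | hb
      · rcases Nat.lt_or_ge a (t - k + 1) with ha2 | ha2
        · exact mk (b + k - t) (fun i => if i = 0 then a else t - k + i)
            (by omega) (by omega)
            (by intro i j hij hj; beta_reduce; split_ifs <;> first | contradiction | omega)
            (by intro i hi; beta_reduce; split_ifs <;> first | contradiction | omega)
            (by intro i hi; beta_reduce; split_ifs <;> first | contradiction | omega)
            x y (by simpa using hx) (by beta_reduce; split_ifs <;> first | contradiction | omega)
        · exact mk (b - a) (fun i => a + i) (by omega) (by omega)
            (by intro i j hij hj; beta_reduce; omega)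
            (by intro i hi; beta_reduce; omega)
            (by intro i hi; beta_reduce; omega)
            x y (by simpa using hx) (by beta_reduce; omega)
      · exact mk 1 (fun i => if i = 0 then a else b) (by omega) (by omega)
          (by intro i j hij hj; beta_reduce; split_ifs <;> first | contradiction | omega)
          (by intro i hi; beta_reduce; split_ifs <;> first | contradiction | omega)
          (by intro i hi; beta_reduce; split_ifs <;> first | contradiction | omega)
          x y (by simpa using hx) (by simpa using hy)
  have hGinj : Function.Injective
      (fun i : Fin t => c (v, ⟨i.val + 1, by omega⟩)) := by
    intro i j hij
    by_contra hne
    rcases Nat.lt_trichotomy i.val j.val with h|h|h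
    · exact key (i.val+1) (j.val+1) (by omega) (by omega) (by omega) _ _ rfl rfl hij
    · exact hne (Fin.ext h)
    · exact key (j.val+1) (i.val+1) (by omega) (by omega) (by omega) _ _ rfl rfl hij.symm
  obtain ⟨j, hj⟩ := Finite.surjective_of_injective hGinj (c (v, 0))
  by_cases hjt : j.val + 1 = t
  · have he : (⟨j.val + 1, by omega⟩ : Fin (t+1)) = Fin.last t := by
      apply Fin.ext; simp [hjt, Fin.last]
    simp only at hj
    rw [he] at hj
    exact hj.symm
  · exfalso
    simp only at hj
    exact key 0 (j.val+1) (by omega) (by omega) (by omega)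
      (0 : Fin (t+1)) ⟨j.val+1, by omega⟩ (by simp) rfl hj.symm
end

section
/- Let k ≥ 3 and t > k, and let H be the oriented graph constructed from a simple graph G as in the standard reduction (with v_in, v_out, a transitive tournament on t−k+1 vertices, and connecting paths for each vertex v, and arc u_out → v_in for each arc of an acyclic orientation of G). Then G is t-colourable if and only if H has a k-dipath t-colouring. -/
section Aux

variable {V : Type*} {E : V → V → Prop} {k t : ℕ}

lemma arc_val_lt (ht0 : 0 < t) {a b : V × Fin (t+1)} (h : Hrel E k t a b) :
    a.2.val < b.2.val := by
  rcases h with ⟨-, h⟩ | ⟨-, h0, h1⟩ <;> omega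

lemma walk_mono (ht0 : 0 < t) {n : ℕ} {p : ℕ → V × Fin (t+1)}
    (hw : IsDiwalk (Hrel E k t) n p) :
    ∀ i j, i < j → j ≤ n → (p i).2.val < (p j).2.val := by
  intro i j hij hjn
  induction j with
  | zero => omega
  | succ j ih =>
    have h := arc_val_lt ht0 (hw j (by omega))
    rcases Nat.lt_succ_iff_lt_or_eq.mp hij with h' | h'
    · exact lt_trans (ih h' (by omega)) h
    · subst h'; exact h

lemma diwalk_isDipath (ht0 : 0 < t) {n : ℕ} {p : ℕ → V × Fin (t+1)}
    (hw : IsDiwalk (Hrel E k t) n p) : IsDipath (Hrel E k t) n p := by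
  refine ⟨hw, fun i hi j hj hij => ?_⟩
  rcases lt_trichotomy i j with h | h | h
  · have := walk_mono ht0 hw i j h hj; rw [hij] at this; omega
  · exact h
  · have := walk_mono ht0 hw j i h hi; rw [hij] at this; omega

/-- reachability by a walk of given length -/
def Reach {W : Type*} (A : W → W → Prop) (n : ℕ) (x y : W) : Prop :=
  ∃ p : ℕ → W, IsDiwalk A n p ∧ p 0 = x ∧ p n = y

lemma reach_refl {W : Type*} (A : W → W → Prop) (x : W) : Reach A 0 x x :=
  ⟨fun _ => x, fun i hi => absurd hi (by omega), rfl, rfl⟩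

lemma reach_single {W : Type*} {A : W → W → Prop} {x y : W} (h : A x y) : Reach A 1 x y := by
  refine ⟨fun i => if i = 0 then x else y, ?_, by simp, by simp⟩
  intro i hi
  have : i = 0 := by omega
  subst this; simpa using h

lemma reach_trans {W : Type*} {A : W → W → Prop} {m n : ℕ} {x y z : W}
    (h1 : Reach A m x y) (h2 : Reach A n y z) : Reach A (m+n) x z := by
  obtain ⟨p, hp, hp0, hpm⟩ := h1
  obtain ⟨q, hq, hq0, hqn⟩ := h2
  refine ⟨fun i => if i ≤ m then p i else q (i - m), ?_, by simp [hp0], ?_⟩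
  · intro i hi
    rcases Nat.lt_or_ge i m with h | h
    · have h1 : i ≤ m := by omega
      have h2 : i + 1 ≤ m := by omega
      simpa [h1, h2] using hp i h
    · rcases Nat.eq_or_lt_of_le h with rfl | h'
      · have hn : 0 < n := by omega
        have e1 : ¬ (m + 1 ≤ m) := by omega
        dsimp only
        rw [if_pos (le_refl m), if_neg e1, show m + 1 - m = 1 by omega, hpm, ← hq0]
        exact hq 0 hn
      · have e1 : ¬ (i ≤ m) := by omega
        have e2 : ¬ (i + 1 ≤ m) := by omega
        dsimp only
        rw [if_neg e1, if_neg e2, show i + 1 - m = (i - m) + 1 by omega]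
        exact hq (i - m) (by omega)
  · rcases Nat.eq_zero_or_pos n with rfl | hn
    · simpa using hpm.trans (hq0.symm.trans hqn)
    · have e : ¬ (m + n ≤ m) := by omega
      dsimp only
      rw [if_neg e, Nat.add_sub_cancel_left, hqn]

lemma reach_ne {c : V × Fin (t+1) → Fin t} (hc : IsDipathColoring (Hrel E k t) k c)
    (ht0 : 0 < t) {ℓ : ℕ} (h1 : 0 < ℓ) (h2 : ℓ ≤ k) {x y : V × Fin (t+1)}
    (h : Reach (Hrel E k t) ℓ x y) : c x ≠ c y := by
  obtain ⟨p, hp, rfl, rfl⟩ := h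
  exact hc ℓ h1 h2 p (diwalk_isDipath ht0 hp)

end Aux

section Aux2

variable {V : Type*} {E : V → V → Prop} {k t : ℕ}

lemma hrel_gadget {u : V} {x y : Fin (t+1)}
    (h : (1 ≤ x.val ∧ x.val < y.val ∧ y.val ≤ t - k + 1) ∨
         (t - k + 1 ≤ x.val ∧ x.val ≤ t - 1 ∧ y.val = x.val + 1) ∨
         (x.val = 0 ∧ y.val = 1)) :
    Hrel E k t (u, x) (u, y) := Or.inl ⟨rfl, h⟩

/-- chain of consecutive path arcs from `x` to `x + d` -/
lemma reach_chain (hk3 : 3 ≤ k) (htk : k < t) (u : V) :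
    ∀ d x b (hx : t - k + 1 ≤ x) (hb : x + d = b) (hbt : b ≤ t),
      Reach (Hrel E k t) d ((u, ⟨x, by omega⟩) : V × Fin (t+1)) (u, ⟨b, by omega⟩) := by
  intro d
  induction d with
  | zero =>
    intro x b hx hb hbt
    have : b = x := by omega
    subst this
    exact reach_refl _ _
  | succ d ih =>
    intro x b hx hb hbt
    have h1 : Reach (Hrel E k t) 1 ((u, ⟨x, by omega⟩) : V × Fin (t+1)) (u, ⟨x+1, by omega⟩) :=
      reach_single (hrel_gadget (Or.inr (Or.inl
        ⟨show t - k + 1 ≤ x from hx, show x ≤ t - 1 by omega, show x + 1 = x + 1 from rfl⟩)))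
    have h2 := ih (x+1) b (by omega) (by omega) hbt
    have := reach_trans h1 h2
    rwa [show 1 + d = d + 1 by omega] at this

lemma gadget_reach (hk3 : 3 ≤ k) (htk : k < t) (u : V) :
    ∀ a b (hat : a ≤ t) (hab : a < b) (hbt : b ≤ t) (hside : 1 ≤ a ∨ b ≤ t - 1),
    ∃ ℓ, 1 ≤ ℓ ∧ ℓ ≤ k ∧
      Reach (Hrel E k t) ℓ ((u, ⟨a, by omega⟩) : V × Fin (t+1)) (u, ⟨b, by omega⟩) := by
  intro a b hat hab hbt hside
  have harc01 : Hrel E k t ((u, ⟨0, by omega⟩) : V × Fin (t+1)) (u, ⟨1, by omega⟩) :=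
    hrel_gadget (Or.inr (Or.inr ⟨rfl, rfl⟩))
  rcases Nat.eq_zero_or_pos a with rfl | ha
  · -- a = 0
    have hb1 : b ≤ t - 1 := by omega
    rcases Nat.lt_or_ge (t - k + 1) b with hsb | hbs
    · -- 0 → 1 → s → chain → b
      refine ⟨2 + (b - (t - k + 1)), by omega, by omega, ?_⟩
      have h2 : Reach (Hrel E k t) 1 ((u, ⟨1, by omega⟩) : V × Fin (t+1))
          (u, ⟨t - k + 1, by omega⟩) :=
        reach_single (hrel_gadget (Or.inl
          ⟨show 1 ≤ 1 from le_refl _, show 1 < t - k + 1 by omega, le_refl _⟩))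
      have h3 := reach_chain (E := E) hk3 htk u (b - (t - k + 1)) (t - k + 1) b (le_refl _) (by omega) hbt
      exact reach_trans (reach_trans (reach_single harc01) h2) h3
    · rcases Nat.eq_or_lt_of_le hab with hb1' | hb2
      · -- b = 1
        refine ⟨1, le_refl _, by omega, ?_⟩
        refine reach_single (hrel_gadget (Or.inr (Or.inr ⟨rfl, ?_⟩)))
        show b = 1; omega
      · -- 2 ≤ b ≤ s
        refine ⟨2, by omega, by omega, ?_⟩
        have h2 : Reach (Hrel E k t) 1 ((u, ⟨1, by omega⟩) : V × Fin (t+1)) (u, ⟨b, by omega⟩) :=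
          reach_single (hrel_gadget (Or.inl
            ⟨show 1 ≤ 1 from le_refl _, show 1 < b by omega, show b ≤ t - k + 1 from hbs⟩))
        exact reach_trans (reach_single harc01) h2
  · -- 1 ≤ a
    rcases Nat.lt_or_ge (t - k + 1) b with hsb | hbs
    · rcases Nat.lt_or_ge a (t - k + 1) with has | hsa
      · -- a → s → chain → b
        refine ⟨1 + (b - (t - k + 1)), by omega, by omega, ?_⟩
        have h1 : Reach (Hrel E k t) 1 ((u, ⟨a, by omega⟩) : V × Fin (t+1))
            (u, ⟨t - k + 1, by omega⟩) :=
          reach_single (hrel_gadget (Or.inl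
            ⟨show 1 ≤ a from ha, show a < t - k + 1 from has, le_refl _⟩))
        have h2 := reach_chain (E := E) hk3 htk u (b - (t - k + 1)) (t - k + 1) b (le_refl _) (by omega) hbt
        exact reach_trans h1 h2
      · -- chain directly
        refine ⟨b - a, by omega, by omega, ?_⟩
        exact reach_chain (E := E) hk3 htk u (b - a) a b hsa (by omega) hbt
    · -- single tournament arc
      exact ⟨1, le_refl _, by omega,
        reach_single (hrel_gadget (Or.inl
          ⟨show 1 ≤ a from ha, show a < b from hab, show b ≤ t - k + 1 from hbs⟩))⟩

end Aux2

section Aux3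

variable {V : Type*} {E : V → V → Prop} {k t : ℕ}

lemma conflictF (hk3 : 3 ≤ k) (htk : k < t) {c : V × Fin (t+1) → Fin t}
    (hc : IsDipathColoring (Hrel E k t) k c) (u : V) (x y : Fin (t+1))
    (hlt : x.val < y.val) (hside : 1 ≤ x.val ∨ y.val ≤ t - 1) :
    c (u, x) ≠ c (u, y) := by
  obtain ⟨ℓ, h1, h2, hr⟩ := gadget_reach (E := E) hk3 htk u x.val y.val
    (by omega) hlt (by omega) hside
  exact reach_ne hc (by omega) h1 h2 hr

lemma c0_eq_ct (hk3 : 3 ≤ k) (htk : k < t) {c : V × Fin (t+1) → Fin t}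
    (hc : IsDipathColoring (Hrel E k t) k c) (u : V) (x y : Fin (t+1))
    (hx : x.val = 0) (hy : y.val = t) : c (u, x) = c (u, y) := by
  have ht0 : 0 < t := by omega
  set g : Fin t → Fin t := fun j => c (u, ⟨j.val + 1, by omega⟩) with hg
  have ginj : Function.Injective g := by
    intro i j hij
    by_contra hne
    rcases lt_trichotomy i.val j.val with h | h | h
    · exact conflictF hk3 htk hc u ⟨i.val + 1, by omega⟩ ⟨j.val + 1, by omega⟩
        (show i.val + 1 < j.val + 1 by omega)
        (Or.inl (show 1 ≤ i.val + 1 by omega)) hij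
    · exact hne (Fin.ext h)
    · exact conflictF hk3 htk hc u ⟨j.val + 1, by omega⟩ ⟨i.val + 1, by omega⟩
        (show j.val + 1 < i.val + 1 by omega)
        (Or.inl (show 1 ≤ j.val + 1 by omega)) hij.symm
  obtain ⟨j, hj⟩ := (Finite.injective_iff_surjective.mp ginj) (c (u, x))
  have hjt : j.val + 1 = t := by
    by_contra hne
    have hj1 : j.val + 1 ≤ t - 1 := by have := j.isLt; omega
    exact conflictF hk3 htk hc u x ⟨j.val + 1, by omega⟩
      (show x.val < j.val + 1 by omega) (Or.inr hj1) hj.symm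
  have e : ((⟨j.val + 1, by omega⟩ : Fin (t+1))) = y :=
    Fin.ext (show j.val + 1 = y.val by omega)
  exact hj.symm.trans (congrArg c (congrArg (Prod.mk u) e))

end Aux3


/-- for `t > k ≥ 3` and an acyclic orientation `E` of a simple
graph `Gadj`, the graph `Gadj` is `t`-colourable iff `H_{k,t}` has a
`k`-dipath `t`-colouring. -/
theorem stmt17 {V : Type*} (k t : ℕ) (hk : 3 ≤ k) (ht : k < t)
    (Gadj : V → V → Prop) (hsym : Symmetric Gadj) (hirr : Irreflexive Gadj)
    (E : V → V → Prop) (hE : Acyclic E)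
    (horient : ∀ u v, Gadj u v ↔ (E u v ∨ E v u)) :
    (∃ f : V → Fin t, ∀ u v, Gadj u v → f u ≠ f v) ↔
      ∃ c : V × Fin (t + 1) → Fin t, IsDipathColoring (Hrel E k t) k c := by
  have ht0 : 0 < t := by omega
  constructor
  · -- forward
    rintro ⟨f, hf⟩
    refine ⟨fun x => ⟨((f x.1).val + x.2.val) % t, Nat.mod_lt _ ht0⟩, ?_⟩
    intro ℓ hl0 hlk p hp
    have hw := hp.1
    have mono := walk_mono ht0 hw
    rcases hw 0 hl0 with ⟨heq1, hcond⟩ | ⟨hE01, h0, h1t⟩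
    · -- arc 0 is a gadget arc: whole walk stays in one gadget
      have hgad : ∀ i, i < ℓ → (p i).1 = (p (i+1)).1 ∧
          ((1 ≤ (p i).2.val ∧ (p i).2.val < (p (i+1)).2.val ∧ (p (i+1)).2.val ≤ t - k + 1) ∨
           (t - k + 1 ≤ (p i).2.val ∧ (p i).2.val ≤ t - 1 ∧ (p (i+1)).2.val = (p i).2.val + 1) ∨
           ((p i).2.val = 0 ∧ (p (i+1)).2.val = 1)) := by
        intro i hi
        rcases hw i hi with ⟨he, hc'⟩ | ⟨hE', h0', ht'⟩
        · exact ⟨he, hc'⟩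
        · exfalso
          rcases Nat.eq_zero_or_pos i with rfl | hi0
          · exact hirr (p 1).1 ((horient _ _).mpr (Or.inl (heq1 ▸ hE')))
          · have := mono 0 i hi0 (by omega); omega
      have hsame : ∀ i, i ≤ ℓ → (p i).1 = (p 0).1 := by
        intro i
        induction i with
        | zero => intro _; rfl
        | succ i ih => intro h; rw [← (hgad i (by omega)).1]; exact ih (by omega)
      intro hceq
      have hv : ((f (p 0).1).val + (p 0).2.val) % t = ((f (p ℓ).1).val + (p ℓ).2.val) % t :=
        congrArg Fin.val hceq
      rw [hsame ℓ (le_refl _)] at hv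
      have hlt : (p 0).2.val < (p ℓ).2.val := mono 0 ℓ hl0 (le_refl _)
      have hbℓ : (p ℓ).2.val ≤ t := by have := (p ℓ).2.isLt; omega
      have hmodeq : Nat.ModEq t ((f (p 0).1).val + (p 0).2.val)
          ((f (p 0).1).val + (p ℓ).2.val) := hv
      have hmodeq2 : Nat.ModEq t (p 0).2.val (p ℓ).2.val :=
        Nat.ModEq.add_left_cancel' _ hmodeq
      have hdvd : t ∣ (p ℓ).2.val - (p 0).2.val :=
        (Nat.modEq_iff_dvd' (le_of_lt hlt)).mp hmodeq2
      have hle := Nat.le_of_dvd (by omega) hdvd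
      have ha0 : (p 0).2.val = 0 := by omega
      have haℓ : (p ℓ).2.val = t := by omega
      have ha1 : (p 1).2.val = 1 := by
        have hbridge : (p (0+1)).2.val = (p 1).2.val := rfl
        rcases hcond with h | h | h <;> omega
      have hC : ∀ d, d ≤ k - 1 → d < ℓ → (p (ℓ - d)).2.val = t - d := by
        intro d
        induction d with
        | zero => intro _ _; simpa using haℓ
        | succ d ih =>
          intro hdk hdl
          have hih := ih (by omega) (by omega)
          have harc := hgad (ℓ - d - 1) (by omega)
          have he : ℓ - d - 1 + 1 = ℓ - d := by omega
          rw [he] at harc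
          rw [show ℓ - (d+1) = ℓ - d - 1 by omega]
          rcases harc.2 with h | h | h <;> omega
      have h1' := hC (ℓ - 1) (by omega) (by omega)
      rw [show ℓ - (ℓ - 1) = 1 by omega] at h1'
      omega
    · -- arc 0 is the cross arc; then ℓ = 1
      have hl1 : ℓ = 1 := by
        by_contra hcon
        have h2 : 2 ≤ ℓ := by omega
        have hlt := arc_val_lt ht0 (hw 1 (by omega))
        have hb := (p (1+1)).2.isLt
        have hbridge : (p (0+1)).2.val = (p 1).2.val := rfl
        omega
      subst hl1
      intro hceq
      have hv : ((f (p 0).1).val + (p 0).2.val) % t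
          = ((f (p (0+1)).1).val + (p (0+1)).2.val) % t :=
        congrArg Fin.val hceq
      rw [h0, h1t, Nat.add_zero, Nat.add_mod_right, Nat.mod_eq_of_lt (f (p 0).1).isLt,
        Nat.mod_eq_of_lt (f (p (0+1)).1).isLt] at hv
      exact hf _ _ ((horient _ _).mpr (Or.inl hE01)) (Fin.ext hv)
  · -- backward
    rintro ⟨c, hc⟩
    refine ⟨fun v => c (v, ⟨t, by omega⟩), ?_⟩
    intro u v huv
    have key : ∀ a b : V, E a b →
        c ((a, ⟨t, by omega⟩) : V × Fin (t+1)) ≠ c ((b, ⟨t, by omega⟩) : V × Fin (t+1)) := by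
      intro a b hab
      have hcross : Hrel E k t ((a, ⟨0, by omega⟩) : V × Fin (t+1)) (b, ⟨t, by omega⟩) :=
        Or.inr ⟨hab, rfl, rfl⟩
      have hne := reach_ne hc ht0 (by omega) (by omega) (reach_single hcross)
      rwa [c0_eq_ct hk ht hc a ⟨0, by omega⟩ ⟨t, by omega⟩ rfl rfl] at hne
    rcases (horient u v).mp huv with h | h
    · exact key u v h
    · exact (key v u h).symm
end
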